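/- Let G, G^I : ℝ → ℂ^{p×m} be matrix-valued functions with G^I(ω) = G(ω)(I + Z G(ω))^{-1} where Z = (-Π_aa)^{-1}Π_ζa^T and I + Z G(ω) is invertible. Let Π = [[Π_ζζ, Π_ζa],[Π_ζa^T, Π_aa]] and Π^I = diag(Π/Π_aa, Π_aa) with Π/Π_aa the Schur complement. Then for every v ∈ ℂ^m, setting u = (I + Z G(ω))v, one has [G(ω); -I]v conjugate-quadratic-form under Π equals [G^I(ω); -I]u conjugate-quadratic-form under Π^I, i.e. v^H [G(ω);-I]^H Π [G(ω);-I] v = u^H [G^I(ω);-I]^H Π^I [G^I(ω);-I] u. -/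

import Mathlib

open Matrix

set_option maxHeartbeats 1000000

lemma mapCT {i j : Type*} (A : Matrix i j ℝ) :
    (A.map Complex.ofReal).conjTranspose = A.transpose.map Complex.ofReal := by
  ext a b
  simp [conjTranspose_apply]

lemma mapMul {i j k : Type*} [Fintype j] (A : Matrix i j ℝ) (B : Matrix j k ℝ) :
    (A * B).map Complex.ofReal = A.map Complex.ofReal * B.map Complex.ofReal :=
  Matrix.map_mul (f := Complex.ofRealHom)

/-- Lemma 6.5: transformed quadratic form identity
vᴴ[G;-I]ᴴ Π [G;-I]v = uᴴ[Gᴵ;-I]ᴴ Πᴵ [Gᴵ;-I]u with u = (I+ZG)v. -/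
theorem stmt8 {p m : ℕ}
    (Pzz : Matrix (Fin p) (Fin p) ℝ) (Pza : Matrix (Fin p) (Fin m) ℝ)
    (Paa : Matrix (Fin m) (Fin m) ℝ) (hPzz : Pzz.IsSymm) (hPaa : Paa.IsSymm)
    (hneg : (-Paa).PosDef)
    (G GI : Matrix (Fin p) (Fin m) ℂ) (v : Fin m → ℂ) :
    let Zc : Matrix (Fin m) (Fin p) ℂ := ((-Paa)⁻¹ * Pza.transpose).map Complex.ofReal
    let Pi : Matrix (Fin p ⊕ Fin m) (Fin p ⊕ Fin m) ℂ :=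
      (fromBlocks Pzz Pza Pza.transpose Paa).map Complex.ofReal
    let PiI : Matrix (Fin p ⊕ Fin m) (Fin p ⊕ Fin m) ℂ :=
      (fromBlocks (Pzz + Pza * (-Paa)⁻¹ * Pza.transpose) 0 0 Paa).map Complex.ofReal
    let u : Fin m → ℂ := (1 + Zc * G) *ᵥ v
    IsUnit (1 + Zc * G) → GI = G * (1 + Zc * G)⁻¹ →
      star v ⬝ᵥ (((fromRows G (-1 : Matrix (Fin m) (Fin m) ℂ)).conjTranspose * Pi * fromRows G (-1 : Matrix (Fin m) (Fin m) ℂ)) *ᵥ v)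
        = star u ⬝ᵥ (((fromRows GI (-1 : Matrix (Fin m) (Fin m) ℂ)).conjTranspose * PiI * fromRows GI (-1 : Matrix (Fin m) (Fin m) ℂ)) *ᵥ u) := by
  intro Zc Pi PiI u hW hGI
  set W : Matrix (Fin m) (Fin m) ℂ := 1 + Zc * G with hWdef
  -- real facts
  have hdet : IsUnit (-Paa).det := isUnit_iff_ne_zero.mpr (ne_of_gt hneg.det_pos)
  have hmulinv : (-Paa) * (-Paa)⁻¹ = 1 := mul_nonsing_inv _ hdet
  have hinvmul : (-Paa)⁻¹ * (-Paa) = 1 := nonsing_inv_mul _ hdet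
  have hnegT : (-Paa).transpose = -Paa := by rw [transpose_neg, hPaa]
  have hinvT : ((-Paa)⁻¹).transpose = (-Paa)⁻¹ := by
    rw [transpose_nonsing_inv, hnegT]
  have hR1 : Paa * ((-Paa)⁻¹ * Pza.transpose) = -Pza.transpose := by
    rw [← Matrix.mul_assoc]
    have : Paa * (-Paa)⁻¹ = -1 := by
      calc Paa * (-Paa)⁻¹ = -((-Paa) * (-Paa)⁻¹) := by rw [Matrix.neg_mul, neg_neg]
      _ = -1 := by rw [hmulinv]
    rw [this, Matrix.neg_mul, Matrix.one_mul]
  have hZT : ((-Paa)⁻¹ * Pza.transpose).transpose = Pza * (-Paa)⁻¹ := by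
    rw [transpose_mul, transpose_transpose, hinvT]
  have hR2 : (Pza * (-Paa)⁻¹) * Paa = -Pza := by
    rw [Matrix.mul_assoc]
    have : (-Paa)⁻¹ * Paa = -1 := by
      calc (-Paa)⁻¹ * Paa = -((-Paa)⁻¹ * (-Paa)) := by rw [Matrix.mul_neg, neg_neg]
      _ = -1 := by rw [hinvmul]
    rw [this, Matrix.mul_neg, Matrix.mul_one]
  -- complex abbreviations
  set A : Matrix (Fin p) (Fin p) ℂ := Pzz.map Complex.ofReal with hA
  set B : Matrix (Fin p) (Fin m) ℂ := Pza.map Complex.ofReal with hB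
  set C : Matrix (Fin m) (Fin m) ℂ := Paa.map Complex.ofReal with hC
  have hBT : Pza.transpose.map Complex.ofReal = B.conjTranspose := by rw [mapCT]
  have hZH : Zc.conjTranspose = (Pza * (-Paa)⁻¹).map Complex.ofReal := by
    rw [show Zc = ((-Paa)⁻¹ * Pza.transpose).map Complex.ofReal from rfl, mapCT, hZT]
  have hmapneg : ∀ (Y : Matrix (Fin p) (Fin m) ℝ),
      (-Y).map Complex.ofReal = -(Y.map Complex.ofReal) := by
    intro Y; ext a b; simp
  have hCZ : C * Zc = -B.conjTranspose := by
    rw [show Zc = ((-Paa)⁻¹ * Pza.transpose).map Complex.ofReal from rfl,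
      hC, ← mapMul, hR1, ← hBT]
    ext a b; simp
  have hZHC : Zc.conjTranspose * C = -B := by
    rw [hZH, hC, ← mapMul, hR2, hB, hmapneg]
  set S : Matrix (Fin p) (Fin p) ℂ := (Pza * (-Paa)⁻¹ * Pza.transpose).map Complex.ofReal with hS
  have hZHCZ : Zc.conjTranspose * C * Zc = -S := by
    rw [Matrix.mul_assoc, hCZ, Matrix.mul_neg, hZH, ← hBT, ← mapMul, hS]
  -- GI * W = G
  have hGIW : GI * W = G := by
    rw [hGI, Matrix.mul_assoc, nonsing_inv_mul _ ((isUnit_iff_isUnit_det _).mp hW),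
      Matrix.mul_one]
  have hGH : G.conjTranspose = W.conjTranspose * GI.conjTranspose := by
    rw [← conjTranspose_mul, hGIW]
  -- block expansion
  have expand : ∀ (H : Matrix (Fin p) (Fin m) ℂ) (X : Matrix (Fin p) (Fin p) ℂ)
      (Y : Matrix (Fin p) (Fin m) ℂ),
      (fromRows H (-1 : Matrix (Fin m) (Fin m) ℂ)).conjTranspose *
        (fromBlocks X Y Y.conjTranspose C) * fromRows H (-1 : Matrix (Fin m) (Fin m) ℂ)
        = H.conjTranspose * X * H - Y.conjTranspose * H - H.conjTranspose * Y + C := by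
    intro H X Y
    rw [conjTranspose_fromRows_eq_fromCols_conjTranspose, Matrix.mul_assoc,
      fromBlocks_mul_fromRows, fromCols_mul_fromRows]
    simp only [conjTranspose_neg, conjTranspose_one, Matrix.neg_mul, Matrix.mul_neg,
      Matrix.one_mul, Matrix.mul_one, Matrix.mul_add, Matrix.add_mul, Matrix.mul_assoc,
      sub_eq_add_neg, neg_add, neg_neg]
    abel
  have hPi : Pi = fromBlocks A B B.conjTranspose C := by
    rw [show Pi = (fromBlocks Pzz Pza Pza.transpose Paa).map Complex.ofReal from rfl,
      fromBlocks_map, hBT, hA, hB, hC]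
  have hPiI : PiI = fromBlocks (A + S) 0 (0 : Matrix (Fin p) (Fin m) ℂ).conjTranspose C := by
    rw [show PiI = (fromBlocks (Pzz + Pza * (-Paa)⁻¹ * Pza.transpose) 0 0 Paa).map
      Complex.ofReal from rfl]
    ext a b
    rcases a with a | a <;> rcases b with b | b <;>
      simp [hA, hS, hC, conjTranspose_apply]
  -- key matrix identity
  have hWCW : W.conjTranspose * C * W
      = C - G.conjTranspose * B - B.conjTranspose * G - G.conjTranspose * S * G := by
    have hWH : W.conjTranspose = 1 + G.conjTranspose * Zc.conjTranspose := by
      rw [hWdef, conjTranspose_add, conjTranspose_one, conjTranspose_mul]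
    have e1 : (1 + G.conjTranspose * Zc.conjTranspose) * C * (1 + Zc * G)
        = C + G.conjTranspose * (Zc.conjTranspose * C) + (C * Zc) * G
          + G.conjTranspose * ((Zc.conjTranspose * C) * Zc) * G := by
      simp only [Matrix.mul_add, Matrix.add_mul, Matrix.one_mul, Matrix.mul_one,
        Matrix.mul_assoc]
      abel
    rw [hWH, hWdef, e1, hZHCZ, hZHC, hCZ]
    simp only [Matrix.mul_neg, Matrix.neg_mul, sub_eq_add_neg]
  have key : (fromRows G (-1 : Matrix (Fin m) (Fin m) ℂ)).conjTranspose * Pi * fromRows G (-1 : Matrix (Fin m) (Fin m) ℂ)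
      = W.conjTranspose * ((fromRows GI (-1 : Matrix (Fin m) (Fin m) ℂ)).conjTranspose * PiI * fromRows GI (-1 : Matrix (Fin m) (Fin m) ℂ)) * W := by
    rw [hPi, hPiI, expand G A B, expand GI (A + S) 0]
    simp only [conjTranspose_zero, Matrix.zero_mul, Matrix.mul_zero, sub_zero]
    have main : W.conjTranspose * (GI.conjTranspose * (A + S) * GI + C) * W
        = G.conjTranspose * (A + S) * G + W.conjTranspose * C * W := by
      have step : W.conjTranspose * (GI.conjTranspose * (A + S) * GI + C) * W
          = (W.conjTranspose * GI.conjTranspose) * ((A + S) * (GI * W))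
            + W.conjTranspose * C * W := by
        simp only [Matrix.mul_add, Matrix.add_mul, Matrix.mul_assoc]
      rw [step, hGIW, ← hGH]
      simp only [Matrix.mul_assoc]
    rw [main, hWCW]
    simp only [Matrix.mul_add, Matrix.add_mul, Matrix.mul_assoc, sub_eq_add_neg]
    abel
  -- finish via dot products
  rw [key]
  have hu : u = W *ᵥ v := rfl
  rw [hu]
  conv_rhs => rw [star_mulVec, ← dotProduct_mulVec, mulVec_mulVec, mulVec_mulVec]
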